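/- Let 𝔮 > 0, 𝔮 ≠ 1, let k >= 1, let p_1,...,p_k >= 1 and γ_1,...,γ_k > 0 with sum γ_i = 1, and let α be the piecewise linear function on [0,1] with α(0)=0 and slope p_i on the i-th piece. Set θ_0 = 0 and θ_i = sum_{j=1}^{i} p_j γ_j. Then for t outside the closed interval with endpoints 1 and 𝔮^{θ_k}, the function x(t) = 𝔮^{-t ∫_0^1 du/(t - 𝔮^{α(u)})} equals 𝔮^{-1} · prod_{i=1}^{k} ((t - 𝔮^{θ_i})/(t - 𝔮^{θ_{i-1}}))^{1/p_i}. -/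

import Mathlib

open Finset

lemma piece_int (t L p c A B : ℝ) (hpL : p * L ≠ 0)
    (hne : ∀ u ∈ Set.uIcc A B, t - Real.exp (L * (p * u + c)) ≠ 0) :
    ∫ u in A..B, t * (t - Real.exp (L * (p * u + c)))⁻¹
      = (-(p * L)⁻¹ * Real.log (t - Real.exp (L * (p * B + c))) + B)
        - (-(p * L)⁻¹ * Real.log (t - Real.exp (L * (p * A + c))) + A) := by
  have hcont : ContinuousOn (fun u => t * (t - Real.exp (L * (p * u + c)))⁻¹) (Set.uIcc A B) := by
    refine ContinuousOn.mul continuousOn_const (ContinuousOn.inv₀ ?_ hne)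
    fun_prop
  refine intervalIntegral.integral_eq_sub_of_hasDerivAt
    (f := fun u => -(p * L)⁻¹ * Real.log (t - Real.exp (L * (p * u + c))) + u) ?_
    (hcont.intervalIntegrable)
  intro x hx
  have h1 : HasDerivAt (fun u : ℝ => L * (p * u + c)) (L * p) x := by
    simpa using (((hasDerivAt_id x).const_mul p).add_const c).const_mul L
  have hQ : HasDerivAt (fun u => Real.exp (L * (p * u + c)))
      (p * L * Real.exp (L * (p * x + c))) x := by
    simpa [mul_comm, mul_assoc, mul_left_comm] using h1.exp
  have h2 : HasDerivAt (fun u => t - Real.exp (L * (p * u + c)))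
      (-(p * L * Real.exp (L * (p * x + c)))) x := hQ.const_sub t
  have h4 := ((h2.log (hne x hx)).const_mul (-(p * L)⁻¹)).add (hasDerivAt_id x)
  convert h4 using 1
  · rfl
  have ht0 := hne x hx
  field_simp
  rw [mul_div_cancel_left₀ _ (mul_comm p L ▸ hpL)]
  ring

/-- For a piecewise linear starting-point distribution `α` with slopes `p_i ≥ 1` on pieces
of widths `γ_i > 0` summing to `1`, setting `θ_i = ∑_{j=1}^{i} p_j γ_j`, for `t` outside the
closed interval with endpoints `1` and `𝔮^{θ_k}`, the function
`x(t) = 𝔮^{-t ∫₀¹ du/(t-𝔮^{α(u)})}` equals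
`𝔮⁻¹ ∏_{i=1}^{k} ((t-𝔮^{θ_i})/(t-𝔮^{θ_{i-1}}))^{1/p_i}`. -/
theorem stmt18 (𝔮 : ℝ) (hq0 : 0 < 𝔮) (hq1 : 𝔮 ≠ 1) (k : ℕ) (hk : 1 ≤ k)
    (p γ : ℕ → ℝ)
    (hp : ∀ i ∈ Finset.Icc 1 k, 1 ≤ p i)
    (hγ : ∀ i ∈ Finset.Icc 1 k, 0 < γ i)
    (hsum : ∑ i ∈ Finset.Icc 1 k, γ i = 1)
    (α : ℝ → ℝ) (hα0 : α 0 = 0)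
    (hα : ∀ i ∈ Finset.Icc 1 k,
      ∀ u ∈ Set.Icc (∑ j ∈ Finset.Icc 1 (i - 1), γ j) (∑ j ∈ Finset.Icc 1 i, γ j),
        α u = p i * u + ∑ j ∈ Finset.Icc 1 (i - 1), (p j - p i) * γ j)
    (t : ℝ)
    (ht : t ∉ Set.uIcc 1 (𝔮 ^ (∑ j ∈ Finset.Icc 1 k, p j * γ j))) :
    𝔮 ^ (-(t * ∫ u in (0:ℝ)..1, (t - 𝔮 ^ α u)⁻¹)) =
      𝔮⁻¹ * ∏ i ∈ Finset.Icc 1 k,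
        ((t - 𝔮 ^ (∑ j ∈ Finset.Icc 1 i, p j * γ j)) /
            (t - 𝔮 ^ (∑ j ∈ Finset.Icc 1 (i - 1), p j * γ j))) ^ (1 / p i) := by
  classical
  set L := Real.log 𝔮 with hLdef
  have hL0 : L ≠ 0 := by
    intro h
    rcases Real.log_eq_zero.mp h with h | h | h
    · exact absurd h (ne_of_gt hq0)
    · exact hq1 h
    · linarith
  have hrpow : ∀ x : ℝ, 𝔮 ^ x = Real.exp (L * x) := fun x => Real.rpow_def_of_pos hq0 x
  obtain ⟨A, hA⟩ : ∃ A : ℕ → ℝ, ∀ i, A i = ∑ j ∈ Finset.Icc 1 i, γ j := ⟨_, fun _ => rfl⟩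
  obtain ⟨Θ, hΘ⟩ : ∃ Θ : ℕ → ℝ, ∀ i, Θ i = ∑ j ∈ Finset.Icc 1 i, p j * γ j := ⟨_, fun _ => rfl⟩
  have hA0 : A 0 = 0 := by simp [hA]
  have hΘ0 : Θ 0 = 0 := by simp [hΘ]
  have hAk : A k = 1 := by rw [hA]; exact hsum
  have hAsucc : ∀ i, A (i + 1) = A i + γ (i + 1) := fun i => by
    rw [hA, hA, Finset.sum_Icc_succ_top (by omega)]
  have hΘsucc : ∀ i, Θ (i + 1) = Θ i + p (i + 1) * γ (i + 1) := fun i => by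
    rw [hΘ, hΘ, Finset.sum_Icc_succ_top (by omega)]
  have hmem : ∀ i, i < k → i + 1 ∈ Finset.Icc 1 k := fun i hi => by
    simp [Finset.mem_Icc]; omega
  have htermnn : ∀ j ∈ Finset.Icc 1 k, (0:ℝ) ≤ p j * γ j := fun j hj =>
    mul_nonneg (le_trans zero_le_one (hp j hj)) (hγ j hj).le
  have hΘnn : ∀ i, i ≤ k → 0 ≤ Θ i := by
    intro i hik
    rw [hΘ]
    refine Finset.sum_nonneg fun j hj => htermnn j ?_
    have := Finset.mem_Icc.mp hj
    exact Finset.mem_Icc.mpr ⟨this.1, le_trans this.2 hik⟩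
  have hΘle : ∀ i, i ≤ k → Θ i ≤ Θ k := by
    intro i hik
    rw [hΘ, hΘ]
    exact Finset.sum_le_sum_of_subset_of_nonneg (Finset.Icc_subset_Icc le_rfl hik)
      (fun j hj _ => htermnn j hj)
  rw [← hΘ k] at ht
  -- membership of 𝔮^θ in the interval
  have hQmem : ∀ θ : ℝ, 0 ≤ θ → θ ≤ Θ k → 𝔮 ^ θ ∈ Set.uIcc 1 (𝔮 ^ Θ k) := by
    intro θ h0 hθ
    rcases le_total 1 𝔮 with h1 | h1
    · refine Set.mem_uIcc.mpr (Or.inl ⟨?_, Real.rpow_le_rpow_of_exponent_le h1 hθ⟩)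
      calc (1:ℝ) = 𝔮 ^ (0:ℝ) := (Real.rpow_zero 𝔮).symm
      _ ≤ 𝔮 ^ θ := Real.rpow_le_rpow_of_exponent_le h1 h0
    · refine Set.mem_uIcc.mpr (Or.inr ⟨Real.rpow_le_rpow_of_exponent_ge hq0 h1 hθ, ?_⟩)
      calc 𝔮 ^ θ ≤ 𝔮 ^ (0:ℝ) := Real.rpow_le_rpow_of_exponent_ge hq0 h1 h0
      _ = 1 := Real.rpow_zero 𝔮
  have hsign : (∀ v ∈ Set.uIcc 1 (𝔮 ^ Θ k), t < v) ∨ (∀ v ∈ Set.uIcc 1 (𝔮 ^ Θ k), v < t) := by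
    by_contra hc
    push_neg at hc
    obtain ⟨⟨v1, hv1, hv1t⟩, ⟨v2, hv2, hv2t⟩⟩ := hc
    exact ht ((Set.ordConnected_uIcc.out hv1 hv2) ⟨hv1t, hv2t⟩)
  have hne : ∀ θ : ℝ, 0 ≤ θ → θ ≤ Θ k → t - 𝔮 ^ θ ≠ 0 := by
    intro θ h0 hθ
    have h := hQmem θ h0 hθ
    rcases hsign with hs | hs
    · exact ne_of_lt (by linarith [hs _ h])
    · exact ne_of_gt (by linarith [hs _ h])
  have hratio : ∀ θ' θ : ℝ, 0 ≤ θ' → θ' ≤ Θ k → 0 ≤ θ → θ ≤ Θ k →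
      0 < (t - 𝔮 ^ θ) / (t - 𝔮 ^ θ') := by
    intro θ' θ h0' h1' h0 h1
    rcases hsign with hs | hs
    · exact div_pos_iff.mpr (Or.inr ⟨by linarith [hs _ (hQmem θ h0 h1)],
        by linarith [hs _ (hQmem θ' h0' h1')]⟩)
    · exact div_pos_iff.mpr (Or.inl ⟨by linarith [hs _ (hQmem θ h0 h1)],
        by linarith [hs _ (hQmem θ' h0' h1')]⟩)
  -- the pieces
  have hAle : ∀ i, i < k → A i ≤ A (i + 1) := by
    intro i hik
    have := hγ _ (hmem i hik)
    rw [hAsucc]; linarith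
  have hαpiece : ∀ i, i < k → ∀ u ∈ Set.uIcc (A i) (A (i + 1)),
      𝔮 ^ α u = Real.exp (L * (p (i + 1) * u + (Θ i - p (i + 1) * A i))) := by
    intro i hik u hu
    rw [Set.uIcc_of_le (hAle i hik)] at hu
    have hu' : u ∈ Set.Icc (∑ j ∈ Finset.Icc 1 (i + 1 - 1), γ j)
        (∑ j ∈ Finset.Icc 1 (i + 1), γ j) := by
      rw [hA, hA] at hu
      simpa using hu
    have hform := hα (i + 1) (hmem i hik) u hu'
    simp only [Nat.add_sub_cancel] at hform
    have hS : ∑ j ∈ Finset.Icc 1 i, (p j - p (i + 1)) * γ j = Θ i - p (i + 1) * A i := by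
      rw [hΘ, hA, Finset.mul_sum, ← Finset.sum_sub_distrib]
      exact Finset.sum_congr rfl fun j _ => by ring
    rw [hform, hS, hrpow]
  have hexp : ∀ i, i < k → ∀ u ∈ Set.uIcc (A i) (A (i + 1)),
      0 ≤ p (i + 1) * u + (Θ i - p (i + 1) * A i) ∧
        p (i + 1) * u + (Θ i - p (i + 1) * A i) ≤ Θ k := by
    intro i hik u hu
    have hp1 := hp _ (hmem i hik)
    rw [Set.uIcc_of_le (hAle i hik), Set.mem_Icc] at hu
    have hΘs := hΘsucc i
    have hAs := hAsucc i
    constructor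
    · have h1 : Θ i ≤ p (i + 1) * u + (Θ i - p (i + 1) * A i) := by nlinarith [hu.1]
      exact le_trans (hΘnn i (le_of_lt hik)) h1
    · have h2 : p (i + 1) * u + (Θ i - p (i + 1) * A i) ≤ Θ (i + 1) := by nlinarith [hu.2]
      exact le_trans h2 (hΘle (i + 1) hik)
  have hne' : ∀ i, i < k → ∀ u ∈ Set.uIcc (A i) (A (i + 1)),
      t - Real.exp (L * (p (i + 1) * u + (Θ i - p (i + 1) * A i))) ≠ 0 := by
    intro i hik u hu
    have hb := hexp i hik u hu
    have := hne _ hb.1 hb.2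
    rwa [hrpow] at this
  have hint : ∀ i, i < k → IntervalIntegrable (fun u => t * (t - 𝔮 ^ α u)⁻¹)
      MeasureTheory.volume (A i) (A (i + 1)) := by
    intro i hik
    apply ContinuousOn.intervalIntegrable
    have hc : ContinuousOn
        (fun u => t * (t - Real.exp (L * (p (i + 1) * u + (Θ i - p (i + 1) * A i))))⁻¹)
        (Set.uIcc (A i) (A (i + 1))) := by
      refine continuousOn_const.mul (ContinuousOn.inv₀ (by fun_prop) (hne' i hik))
    refine hc.congr fun u hu => ?_
    rw [hαpiece i hik u hu]
  have hpiece : ∀ i, i < k → (∫ u in (A i)..(A (i + 1)), t * (t - 𝔮 ^ α u)⁻¹)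
      = -(p (i + 1) * L)⁻¹ * (Real.log (t - 𝔮 ^ Θ (i + 1)) - Real.log (t - 𝔮 ^ Θ i))
        + γ (i + 1) := by
    intro i hik
    have hp1 := hp _ (hmem i hik)
    have hpL : p (i + 1) * L ≠ 0 := mul_ne_zero (by linarith) hL0
    have hcong : Set.EqOn (fun u => t * (t - 𝔮 ^ α u)⁻¹)
        (fun u => t * (t - Real.exp (L * (p (i + 1) * u + (Θ i - p (i + 1) * A i))))⁻¹)
        (Set.uIcc (A i) (A (i + 1))) := fun u hu => by
      simp only
      rw [hαpiece i hik u hu]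
    rw [intervalIntegral.integral_congr hcong,
      piece_int t L (p (i + 1)) (Θ i - p (i + 1) * A i) (A i) (A (i + 1)) hpL (hne' i hik)]
    have e1 : p (i + 1) * A (i + 1) + (Θ i - p (i + 1) * A i) = Θ (i + 1) := by
      rw [hAsucc, hΘsucc]; ring
    have e2 : p (i + 1) * A i + (Θ i - p (i + 1) * A i) = Θ i := by ring
    rw [e1, e2, hAsucc, ← hrpow, ← hrpow]
    ring
  have htot : t * (∫ u in (0:ℝ)..1, (t - 𝔮 ^ α u)⁻¹)
      = (∑ i ∈ Finset.range k, -(p (i + 1) * L)⁻¹ *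
          (Real.log (t - 𝔮 ^ Θ (i + 1)) - Real.log (t - 𝔮 ^ Θ i))) + 1 := by
    rw [← intervalIntegral.integral_const_mul]
    rw [show (∫ u in (0:ℝ)..1, t * (t - 𝔮 ^ α u)⁻¹)
        = ∫ u in (A 0)..(A k), t * (t - 𝔮 ^ α u)⁻¹ by rw [hA0, hAk]]
    rw [← intervalIntegral.sum_integral_adjacent_intervals
      (fun i hik => hint i hik)]
    rw [Finset.sum_congr rfl (fun i hi => hpiece i (Finset.mem_range.mp hi))]
    rw [Finset.sum_add_distrib]
    congr 1
    have hγsum : ∑ i ∈ Finset.range k, γ (i + 1) = ∑ j ∈ Finset.Icc 1 k, γ j := by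
      rw [← Finset.Ico_add_one_right_eq_Icc, Finset.sum_Ico_eq_sum_range]
      simp only [Nat.add_sub_cancel]
      exact Finset.sum_congr rfl fun i _ => by rw [Nat.add_comm 1 i]
    rw [hγsum, hsum]
  -- final algebra
  simp only [← hΘ]
  have hprod : (∏ i ∈ Finset.Icc 1 k,
        ((t - 𝔮 ^ Θ i) / (t - 𝔮 ^ Θ (i - 1))) ^ (1 / p i))
      = ∏ i ∈ Finset.range k, Real.exp ((p (i + 1))⁻¹ *
          (Real.log (t - 𝔮 ^ Θ (i + 1)) - Real.log (t - 𝔮 ^ Θ i))) := by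
    rw [← Finset.Ico_add_one_right_eq_Icc, Finset.prod_Ico_eq_prod_range]
    simp only [Nat.add_sub_cancel]
    refine Finset.prod_congr rfl fun i hi => ?_
    rw [Nat.add_comm 1 i]
    have hik := Finset.mem_range.mp hi
    simp only [Nat.add_sub_cancel]
    have hr := hratio (Θ i) (Θ (i + 1)) (hΘnn i hik.le) (hΘle i hik.le)
      (hΘnn (i + 1) hik) (hΘle (i + 1) hik)
    rw [Real.rpow_def_of_pos hr,
      Real.log_div (hne _ (hΘnn (i + 1) hik) (hΘle (i + 1) hik))
        (hne _ (hΘnn i hik.le) (hΘle i hik.le)), one_div]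
    ring_nf
  rw [hrpow, htot, hprod,
    show (𝔮⁻¹ : ℝ) = Real.exp (-L) from by rw [Real.exp_neg, Real.exp_log hq0],
    ← Real.exp_sum, ← Real.exp_add, Real.exp_eq_exp]
  have key : (∑ i ∈ Finset.range k, (p (i + 1))⁻¹ *
        (Real.log (t - 𝔮 ^ Θ (i + 1)) - Real.log (t - 𝔮 ^ Θ i)))
      = -(L * ∑ i ∈ Finset.range k, -(p (i + 1) * L)⁻¹ *
          (Real.log (t - 𝔮 ^ Θ (i + 1)) - Real.log (t - 𝔮 ^ Θ i))) := by
    rw [Finset.mul_sum, ← Finset.sum_neg_distrib]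
    refine Finset.sum_congr rfl fun i hi => ?_
    have hp1 := hp _ (hmem i (Finset.mem_range.mp hi))
    have hpne : p (i + 1) ≠ 0 := by linarith
    field_simp
  rw [key]
  ring
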